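/- arXiv:1305.2142 — 3 statements merged into one kernel-verified Lean document; each statement's English description precedes it below -/
import Mathlib

section
/- Let n ≥ 1, let C = (C_i^j(d)) be any collection of elements of ℚ_α indexed by integers d ≥ 1 and ordered pairs i ≠ j in {1,…,n}, and let η ∈ ℚ_α(x) be such that η(α_i) is well-defined and nonzero for every i. Suppose F, F′ ∈ H_α⟪ħ⟫[[q]] are such that F(α_i,ħ,q) ∈ ℚ_α(ħ)[[q]] for every i and F′ is C-recursive. Then the element {x + ħ·q·d/dq}F′ ∈ H_α⟪ħ⟫[[q]], obtained from F′ by adding the product x·F′ (multiplication by the class x in H_α) and ħ times the formal derivative operator q∂/∂q applied to F′, is again C-recursive; and if in addition the pair (F,F′) satisfies the η-MPC, then so does the pair (F, {x + ħ·q·d/dq}F′). -/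
set_option synthInstance.maxHeartbeats 1000000
set_option maxHeartbeats 1000000


/-!
Setting: `Kf n = ℚ(α₁,…,αₙ)` is the field of rational functions in `n` variables over `ℚ`,
`Lf n = ℚ_α⟪ħ⟫` is the algebra of Laurent series in `ħ⁻¹` (modeled as Laurent series in the
variable `t = ħ⁻¹`, so that the coefficient of `ħ^r` is the Hahn-series coefficient at `-r`).
An element `F ∈ H_α⟪ħ⟫[[q]]` is modeled by its `n` evaluations `F : Fin n → PowerSeries (Lf n)`
(by the Chinese remainder theorem, `H_α ≅ ∏ᵢ ℚ_α` via `x ↦ (αᵢ)ᵢ`, so this is faithful).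
-/

open scoped Classical

noncomputable section

namespace SQ

/-- The field `ℚ_α = ℚ(α₁,…,αₙ)`. -/
abbrev Kf (n : ℕ) : Type := FractionRing (MvPolynomial (Fin n) ℚ)

/-- The element `αᵢ ∈ ℚ_α`. -/
def alpha (n : ℕ) (i : Fin n) : Kf n :=
  algebraMap (MvPolynomial (Fin n) ℚ) (Kf n) (MvPolynomial.X i)

/-- `ℚ_α⟪ħ⟫`: Laurent series in `t = ħ⁻¹`. -/
abbrev Lf (n : ℕ) : Type := LaurentSeries (Kf n)

/-- `ħ = t⁻¹` where `t` is the Laurent-series variable. -/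
def hbar (n : ℕ) : Lf n := HahnSeries.single (-1 : ℤ) 1

/-- The substitution `ħ ↦ −ħ` on `ℚ_α⟪ħ⟫`. -/
def negH (n : ℕ) (x : Lf n) : Lf n :=
  ⟨fun a => (-1 : Kf n) ^ a * x.coeff a,
    x.isPWO_support'.mono fun a ha => by
      simp only [Function.mem_support] at ha ⊢
      exact fun h => ha (by rw [h, mul_zero])⟩

/-- `x ∈ ℚ_α⟪ħ⟫` lies in (the image of) `ℚ_α(ħ)`, i.e. `Q(ħ)·x = P(ħ)` for some polynomials
`P, Q` with `Q ≠ 0`. -/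
def IsRatH (n : ℕ) (x : Lf n) : Prop :=
  ∃ P Q : Polynomial (Kf n), Q ≠ 0 ∧
    Polynomial.aeval (hbar n) Q * x = Polynomial.aeval (hbar n) P

/-- `x ∈ ℚ_α⟪ħ⟫` is a rational function of `ħ`, regular at `ħ = c`, with value `v` there. -/
def RegEvalAt (n : ℕ) (x : Lf n) (c v : Kf n) : Prop :=
  ∃ P Q : Polynomial (Kf n), Polynomial.eval c Q ≠ 0 ∧
    Polynomial.aeval (hbar n) Q * x = Polynomial.aeval (hbar n) P ∧
    v = Polynomial.eval c P / Polynomial.eval c Q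

/-- `x` is a rational function of `ħ` regular at `ħ = c`. -/
def RegAt (n : ℕ) (x : Lf n) (c : Kf n) : Prop := ∃ v : Kf n, RegEvalAt n x c v

/-- `x` is a Laurent polynomial in `ħ`, i.e. an element of `ℚ_α[ħ,ħ⁻¹]`. -/
def IsLaurentPolyH (n : ℕ) (x : Lf n) : Prop := x.support.Finite

/-- `x` is a polynomial in `ħ`, i.e. an element of `ℚ_α[ħ]`. -/
def IsPolyH (n : ℕ) (x : Lf n) : Prop :=
  ∃ P : Polynomial (Kf n), x = Polynomial.aeval (hbar n) P

/-- Definition 5.1 (`C`-recursivity).  `C d i j` is the structure constant `C_i^j(d)`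
(only the values with `d ≥ 1` and `j ≠ i` are used). -/
def CRecursive (n : ℕ) (C : ℕ → Fin n → Fin n → Kf n)
    (F : Fin n → PowerSeries (Lf n)) : Prop :=
  ∀ dstar : ℕ,
    (∀ d : ℕ, 1 ≤ d → d ≤ dstar → ∀ i : Fin n,
        IsRatH n (PowerSeries.coeff (R := Lf n) (dstar - d) (F i))) →
    (∀ d : ℕ, 1 ≤ d → d < dstar → ∀ i j : Fin n, i ≠ j →
        RegAt n (PowerSeries.coeff (R := Lf n) d (F i))
          ((alpha n i - alpha n j) / (d : Kf n))) →
    ∀ i : Fin n, ∃ v : ℕ → Fin n → Kf n,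
      (∀ d : ℕ, ∀ j : Fin n, 1 ≤ d → d ≤ dstar → j ≠ i →
          RegEvalAt n (PowerSeries.coeff (R := Lf n) (dstar - d) (F j))
            ((alpha n j - alpha n i) / (d : Kf n)) (v d j)) ∧
      IsLaurentPolyH n
        (PowerSeries.coeff (R := Lf n) dstar (F i)
          - ∑ d ∈ Finset.Icc 1 dstar, ∑ j ∈ Finset.univ.erase i,
              algebraMap (Kf n) (Lf n) (C d i j)
                * (hbar n
                    - algebraMap (Kf n) (Lf n)
                        ((alpha n j - alpha n i) / (d : Kf n)))⁻¹
                * algebraMap (Kf n) (Lf n) (v d j))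

/-- The coefficient of `z^a q^D` in
`Φ^η_{F,F′}(ħ,z,q) = ∑ᵢ (η(αᵢ) e^{αᵢ z} / ∏_{k≠i}(αᵢ−α_k)) F(αᵢ,ħ,q e^{ħz}) F′(αᵢ,−ħ,q)`.
(Only the values `η(αᵢ)` of the rational function `η` enter the definition, so `η` is
represented by its tuple of values `eta : Fin n → Kf n`.) -/
def PhiCoeff (n : ℕ) (eta : Fin n → Kf n) (F F' : Fin n → PowerSeries (Lf n))
    (a D : ℕ) : Lf n :=
  ∑ i : Fin n, ∑ d ∈ Finset.range (D + 1), ∑ m ∈ Finset.range (a + 1),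
    algebraMap (Kf n) (Lf n)
        (eta i / (∏ k ∈ Finset.univ.erase i, (alpha n i - alpha n k))
          * (alpha n i ^ m / (Nat.factorial m : Kf n))
          * ((d : Kf n) ^ (a - m) / (Nat.factorial (a - m) : Kf n)))
      * hbar n ^ (a - m)
      * PowerSeries.coeff (R := Lf n) d (F i)
      * negH n (PowerSeries.coeff (R := Lf n) (D - d) (F' i))

/-- The η mutual polynomiality condition: every coefficient of `z^a q^D` of `Φ^η_{F,F′}`
is a polynomial in `ħ`. -/
def MPC (n : ℕ) (eta : Fin n → Kf n) (F F' : Fin n → PowerSeries (Lf n)) : Prop :=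
  ∀ a D : ℕ, IsPolyH n (PhiCoeff n eta F F' a D)

/-- The operator `{x + ħ·q·d/dq}` on `H_α⟪ħ⟫[[q]]`, in terms of the evaluations at the `αᵢ`:
the coefficient of `q^d` of the `i`-th component is multiplied by `αᵢ + d·ħ` resp. gets
`(αᵢ + dħ)·(coefficient)`. -/
def DOp (n : ℕ) (F' : Fin n → PowerSeries (Lf n)) : Fin n → PowerSeries (Lf n) :=
  fun i => PowerSeries.mk fun d =>
    (algebraMap (Kf n) (Lf n) (alpha n i) + (d : Lf n) * hbar n)
      * PowerSeries.coeff (R := Lf n) d (F' i)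



variable {n : ℕ}

lemma amap_eq (c : Kf n) : algebraMap (Kf n) (Lf n) c = HahnSeries.single (0:ℤ) c := by
  rw [HahnSeries.algebraMap_apply', PowerSeries.algebraMap_apply, Algebra.algebraMap_self,
    RingHom.id_apply, HahnSeries.ofPowerSeries_C, HahnSeries.C_apply]

lemma coeff_amap (c : Kf n) (a : ℤ) :
    (algebraMap (Kf n) (Lf n) c).coeff a = if a = 0 then c else 0 := by
  rw [amap_eq]
  split_ifs with h
  · rw [h, HahnSeries.coeff_single_same]
  · rw [HahnSeries.coeff_single_of_ne h]

lemma coeff_amap_mul (c : Kf n) (x : Lf n) (a : ℤ) :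
    (algebraMap (Kf n) (Lf n) c * x).coeff a = c * x.coeff a := by
  rw [amap_eq, HahnSeries.coeff_single_zero_mul]

lemma coeff_hbar_mul (x : Lf n) (a : ℤ) : (hbar n * x).coeff a = x.coeff (a + 1) := by
  have : a = (a + 1) + (-1) := by ring
  rw [this, hbar, HahnSeries.coeff_single_mul_add, one_mul]
  ring_nf

lemma negH_coeff (x : Lf n) (a : ℤ) : (negH n x).coeff a = (-1 : Kf n) ^ a * x.coeff a := rfl

lemma negH_add (x y : Lf n) : negH n (x + y) = negH n x + negH n y := by
  ext a
  simp [negH_coeff, HahnSeries.coeff_add, mul_add]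

lemma negH_amap_mul (c : Kf n) (x : Lf n) :
    negH n (algebraMap (Kf n) (Lf n) c * x) = algebraMap (Kf n) (Lf n) c * negH n x := by
  ext a
  simp only [negH_coeff, coeff_amap_mul]
  ring

lemma negH_hbar_mul (x : Lf n) :
    negH n (hbar n * x) = -(hbar n * negH n x) := by
  ext a
  simp only [negH_coeff, coeff_hbar_mul, HahnSeries.coeff_neg]
  rw [zpow_add_one₀ (by norm_num : (-1 : Kf n) ≠ 0)]
  ring

lemma negH_natmul (k : ℕ) (x : Lf n) : negH n ((k : Lf n) * x) = (k : Lf n) * negH n x := by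
  rw [← map_natCast (algebraMap (Kf n) (Lf n)) k, negH_amap_mul]

lemma negH_M (c : Kf n) (k : ℕ) (x : Lf n) :
    negH n ((algebraMap (Kf n) (Lf n) c + (k : Lf n) * hbar n) * x)
      = (algebraMap (Kf n) (Lf n) c - (k : Lf n) * hbar n) * negH n x := by
  rw [add_mul, negH_add, negH_amap_mul, mul_assoc, negH_natmul, negH_hbar_mul, sub_mul]
  ring

/-- `ℚ_α`-injectivity facts. -/
lemma mv_inj : Function.Injective (algebraMap (MvPolynomial (Fin n) ℚ) (Kf n)) :=
  IsFractionRing.injective _ _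

lemma alpha_ne_zero (i : Fin n) : alpha n i ≠ 0 := by
  intro h
  have := mv_inj (n := n) (a₁ := MvPolynomial.X i) (a₂ := 0) (by simpa [alpha] using h)
  exact MvPolynomial.X_ne_zero i this

lemma two_alpha_sub_ne (i j : Fin n) (hij : i ≠ j) : 2 * alpha n i - alpha n j ≠ 0 := by
  intro h
  have h2 : algebraMap (MvPolynomial (Fin n) ℚ) (Kf n)
      (2 * MvPolynomial.X i - MvPolynomial.X j) = 0 := by
    simpa [alpha, map_sub, map_mul, map_ofNat] using h
  have := mv_inj (n := n) (a₁ := 2 * MvPolynomial.X i - MvPolynomial.X j) (a₂ := 0)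
    (by simpa using h2)
  have hc := congrArg (MvPolynomial.coeff (Finsupp.single i 1)) this
  have hne : ¬ (Finsupp.single j 1 = Finsupp.single i (1:ℕ)) := by
    intro hh
    exact hij (Finsupp.single_left_injective one_ne_zero hh).symm
  simp only [two_mul, MvPolynomial.coeff_sub, MvPolynomial.coeff_add, MvPolynomial.coeff_zero,
    MvPolynomial.coeff_X, MvPolynomial.coeff_X', if_neg hne] at hc
  norm_num at hc

lemma nat_ne_zero_K {d : ℕ} (hd : 1 ≤ d) : ((d : ℕ) : Kf n) ≠ 0 := by
  exact_mod_cast Nat.cast_ne_zero.mpr (by omega)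

lemma hbar_sub_amap_ne (c : Kf n) : hbar n - algebraMap (Kf n) (Lf n) c ≠ 0 := by
  intro h
  have := congrArg (fun x : Lf n => x.coeff (-1)) h
  simp only [HahnSeries.coeff_sub, coeff_amap] at this
  rw [hbar, HahnSeries.coeff_single_same] at this
  norm_num at this

/-- Laurent-polynomial closure lemmas. -/
lemma lp_add {x y : Lf n} (hx : IsLaurentPolyH n x) (hy : IsLaurentPolyH n y) :
    IsLaurentPolyH n (x + y) :=
  Set.Finite.subset (hx.union hy) (x.support_add_subset (y := y))

lemma lp_mul {x y : Lf n} (hx : IsLaurentPolyH n x) (hy : IsLaurentPolyH n y) :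
    IsLaurentPolyH n (x * y) :=
  Set.Finite.subset (hx.add hy) (HahnSeries.support_mul_subset)

lemma lp_single (a : ℤ) (c : Kf n) : IsLaurentPolyH n (HahnSeries.single a c) :=
  Set.Finite.subset (Set.finite_singleton a) (HahnSeries.support_single_subset)

lemma lp_amap (c : Kf n) : IsLaurentPolyH n (algebraMap (Kf n) (Lf n) c) := by
  rw [amap_eq]; exact lp_single _ _

lemma lp_hbar : IsLaurentPolyH n (hbar n) := lp_single _ _

lemma lp_nat (k : ℕ) : IsLaurentPolyH n (k : Lf n) := by
  rw [← map_natCast (algebraMap (Kf n) (Lf n)) k]; exact lp_amap _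

lemma lp_sum {s : Finset α} {f : α → Lf n} (h : ∀ a ∈ s, IsLaurentPolyH n (f a)) :
    IsLaurentPolyH n (∑ a ∈ s, f a) := by
  classical
  induction s using Finset.induction_on with
  | empty => simp [IsLaurentPolyH]
  | insert _ _ hnot ih =>
      rw [Finset.sum_insert hnot]
      exact lp_add (h _ (Finset.mem_insert_self _ _))
        (ih fun a ha => h _ (Finset.mem_insert_of_mem ha))

def Mpoly (c : Kf n) (k : ℕ) : Polynomial (Kf n) :=
  Polynomial.C c + (k : Polynomial (Kf n)) * Polynomial.X

lemma aeval_Mpoly (c : Kf n) (k : ℕ) :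
    Polynomial.aeval (hbar n) (Mpoly c k)
      = algebraMap (Kf n) (Lf n) c + (k : Lf n) * hbar n := by
  simp [Mpoly]

lemma eval_Mpoly (c : Kf n) (k : ℕ) (t : Kf n) :
    Polynomial.eval t (Mpoly c k) = c + (k : Kf n) * t := by
  simp [Mpoly]

lemma Mpoly_ne_zero {c : Kf n} (hc : c ≠ 0) (k : ℕ) : Mpoly c k ≠ 0 := by
  intro h
  have := congrArg (Polynomial.coeff · 0) h
  simp [Mpoly] at this
  exact hc this

lemma isRatH_of_mul {c : Kf n} (hc : c ≠ 0) (k : ℕ) {x : Lf n}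
    (h : IsRatH n ((algebraMap (Kf n) (Lf n) c + (k : Lf n) * hbar n) * x)) :
    IsRatH n x := by
  obtain ⟨P, Q, hQ, hPQ⟩ := h
  refine ⟨P, Q * Mpoly c k, mul_ne_zero hQ (Mpoly_ne_zero hc k), ?_⟩
  rw [map_mul, aeval_Mpoly, mul_assoc, ← hPQ]
  try ring

lemma regAt_of_mul {c0 : Kf n} (k : ℕ) {x : Lf n} {c : Kf n}
    (hc : c0 + (k : Kf n) * c ≠ 0)
    (h : RegAt n ((algebraMap (Kf n) (Lf n) c0 + (k : Lf n) * hbar n) * x) c) :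
    RegAt n x c := by
  obtain ⟨v, P, Q, hQ, hPQ, hv⟩ := h
  refine ⟨v / (c0 + (k : Kf n) * c), P, Q * Mpoly c0 k, ?_, ?_, ?_⟩
  · rw [Polynomial.eval_mul, eval_Mpoly]; exact mul_ne_zero hQ hc
  · rw [map_mul, aeval_Mpoly, mul_assoc, ← hPQ]; try ring
  · rw [hv, Polynomial.eval_mul, eval_Mpoly]
    field_simp

lemma regEvalAt_mul (c0 : Kf n) (k : ℕ) {x : Lf n} {c v : Kf n}
    (h : RegEvalAt n x c v) :
    RegEvalAt n ((algebraMap (Kf n) (Lf n) c0 + (k : Lf n) * hbar n) * x) c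
      ((c0 + (k : Kf n) * c) * v) := by
  obtain ⟨P, Q, hQ, hPQ, hv⟩ := h
  refine ⟨Mpoly c0 k * P, Q, hQ, ?_, ?_⟩
  · rw [map_mul, aeval_Mpoly, ← hPQ]; try ring
  · rw [hv, Polynomial.eval_mul, eval_Mpoly]
    try field_simp

lemma gen_inv_shift (g a y u : Lf n) (k : ℕ) (hu : u ≠ 0) :
    g * u⁻¹ * (a * y) = (a + (k : Lf n) * u) * (g * u⁻¹ * y) - (k : Lf n) * g * y := by
  field_simp
  ring

lemma coeff_DOp (F' : Fin n → PowerSeries (Lf n)) (j : Fin n) (d : ℕ) :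
    PowerSeries.coeff (R := Lf n) d (DOp n F' j)
      = (algebraMap (Kf n) (Lf n) (alpha n j) + (d : Lf n) * hbar n)
          * PowerSeries.coeff (R := Lf n) d (F' j) := by
  simp [DOp]

theorem part1 (C : ℕ → Fin n → Fin n → Kf n) (F' : Fin n → PowerSeries (Lf n))
    (hrec : CRecursive n C F') : CRecursive n C (DOp n F') := by
  intro dstar H1 H2 i
  have H1' : ∀ d : ℕ, 1 ≤ d → d ≤ dstar → ∀ i : Fin n,
      IsRatH n (PowerSeries.coeff (R := Lf n) (dstar - d) (F' i)) := by
    intro d h1 h2 i'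
    have := H1 d h1 h2 i'
    rw [coeff_DOp] at this
    exact isRatH_of_mul (alpha_ne_zero i') _ this
  have H2' : ∀ d : ℕ, 1 ≤ d → d < dstar → ∀ i' j : Fin n, i' ≠ j →
      RegAt n (PowerSeries.coeff (R := Lf n) d (F' i'))
        ((alpha n i' - alpha n j) / (d : Kf n)) := by
    intro d h1 h2 i' j hne
    have := H2 d h1 h2 i' j hne
    rw [coeff_DOp] at this
    refine regAt_of_mul d ?_ this
    have hd : ((d : ℕ) : Kf n) ≠ 0 := nat_ne_zero_K h1
    have : alpha n i' + (d : Kf n) * ((alpha n i' - alpha n j) / (d : Kf n))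
        = 2 * alpha n i' - alpha n j := by
      field_simp
      ring
    rw [this]
    exact two_alpha_sub_ne i' j hne
  obtain ⟨v, hv1, hv2⟩ := hrec dstar H1' H2' i
  refine ⟨fun d j =>
    (alpha n i + (dstar : Kf n) * ((alpha n j - alpha n i) / (d : Kf n))) * v d j, ?_, ?_⟩
  · intro d j h1 h2 hji
    rw [coeff_DOp]
    have hd : ((d : ℕ) : Kf n) ≠ 0 := nat_ne_zero_K h1
    have h3 : ((dstar : ℕ) : Kf n) = (((dstar - d : ℕ)) : Kf n) + (d : Kf n) := by
      rw [Nat.cast_sub h2]; ring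
    have h4 : (d : Kf n) * ((alpha n j - alpha n i) / (d : Kf n))
        = alpha n j - alpha n i := by
      rw [mul_comm, div_mul_cancel₀ _ hd]
    have heq : alpha n i + (dstar : Kf n) * ((alpha n j - alpha n i) / (d : Kf n))
        = alpha n j + (((dstar - d : ℕ)) : Kf n) * ((alpha n j - alpha n i) / (d : Kf n)) := by
      linear_combination ((alpha n j - alpha n i) / (d : Kf n)) * h3 + h4
    have hres := regEvalAt_mul (alpha n j) (dstar - d) (hv1 d j h1 h2 hji)
    rw [← heq] at hres
    exact hres
  · rw [coeff_DOp]
    set M : Lf n := algebraMap (Kf n) (Lf n) (alpha n i) + (dstar : Lf n) * hbar n with hM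
    have key : ∀ d : ℕ, ∀ j : Fin n,
        algebraMap (Kf n) (Lf n) (C d i j)
            * (hbar n - algebraMap (Kf n) (Lf n) ((alpha n j - alpha n i) / (d : Kf n)))⁻¹
            * algebraMap (Kf n) (Lf n)
                ((alpha n i + (dstar : Kf n) * ((alpha n j - alpha n i) / (d : Kf n))) * v d j)
          = M * (algebraMap (Kf n) (Lf n) (C d i j)
              * (hbar n - algebraMap (Kf n) (Lf n) ((alpha n j - alpha n i) / (d : Kf n)))⁻¹
              * algebraMap (Kf n) (Lf n) (v d j))
            - (dstar : Lf n) * algebraMap (Kf n) (Lf n) (C d i j)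
                * algebraMap (Kf n) (Lf n) (v d j) := by
      intro d j
      set c : Kf n := (alpha n j - alpha n i) / (d : Kf n) with hc
      have hu : hbar n - algebraMap (Kf n) (Lf n) c ≠ 0 := hbar_sub_amap_ne c
      have hM2 : M = algebraMap (Kf n) (Lf n) (alpha n i + (dstar : Kf n) * c)
          + (dstar : Lf n) * (hbar n - algebraMap (Kf n) (Lf n) c) := by
        rw [map_add (algebraMap (Kf n) (Lf n)), map_mul (algebraMap (Kf n) (Lf n)),
          map_natCast (algebraMap (Kf n) (Lf n))]
        ring
      rw [map_mul, hM2]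
      exact gen_inv_shift _ _ _ _ dstar hu
    have hsum : ∑ d ∈ Finset.Icc 1 dstar, ∑ j ∈ Finset.univ.erase i,
          algebraMap (Kf n) (Lf n) (C d i j)
            * (hbar n - algebraMap (Kf n) (Lf n) ((alpha n j - alpha n i) / (d : Kf n)))⁻¹
            * algebraMap (Kf n) (Lf n)
                ((alpha n i + (dstar : Kf n) * ((alpha n j - alpha n i) / (d : Kf n))) * v d j)
        = M * (∑ d ∈ Finset.Icc 1 dstar, ∑ j ∈ Finset.univ.erase i,
              algebraMap (Kf n) (Lf n) (C d i j)
                * (hbar n - algebraMap (Kf n) (Lf n) ((alpha n j - alpha n i) / (d : Kf n)))⁻¹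
                * algebraMap (Kf n) (Lf n) (v d j))
          - ∑ d ∈ Finset.Icc 1 dstar, ∑ j ∈ Finset.univ.erase i,
              (dstar : Lf n) * algebraMap (Kf n) (Lf n) (C d i j)
                * algebraMap (Kf n) (Lf n) (v d j) := by
      rw [Finset.mul_sum, ← Finset.sum_sub_distrib]
      refine Finset.sum_congr rfl fun d _ => ?_
      rw [Finset.mul_sum, ← Finset.sum_sub_distrib]
      exact Finset.sum_congr rfl fun j _ => key d j
    rw [hsum]
    have hre : M * PowerSeries.coeff (R := Lf n) dstar (F' i)
          - (M * (∑ d ∈ Finset.Icc 1 dstar, ∑ j ∈ Finset.univ.erase i,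
                algebraMap (Kf n) (Lf n) (C d i j)
                  * (hbar n - algebraMap (Kf n) (Lf n) ((alpha n j - alpha n i) / (d : Kf n)))⁻¹
                  * algebraMap (Kf n) (Lf n) (v d j))
              - ∑ d ∈ Finset.Icc 1 dstar, ∑ j ∈ Finset.univ.erase i,
                  (dstar : Lf n) * algebraMap (Kf n) (Lf n) (C d i j)
                    * algebraMap (Kf n) (Lf n) (v d j))
        = M * (PowerSeries.coeff (R := Lf n) dstar (F' i)
              - ∑ d ∈ Finset.Icc 1 dstar, ∑ j ∈ Finset.univ.erase i,
                  algebraMap (Kf n) (Lf n) (C d i j)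
                    * (hbar n - algebraMap (Kf n) (Lf n) ((alpha n j - alpha n i) / (d : Kf n)))⁻¹
                    * algebraMap (Kf n) (Lf n) (v d j))
            + ∑ d ∈ Finset.Icc 1 dstar, ∑ j ∈ Finset.univ.erase i,
                (dstar : Lf n) * algebraMap (Kf n) (Lf n) (C d i j)
                  * algebraMap (Kf n) (Lf n) (v d j) := by
      ring
    rw [hre]
    refine lp_add (lp_mul ?_ hv2) (lp_sum fun d _ => lp_sum fun j _ =>
      lp_mul (lp_mul (lp_nat _) (lp_amap _)) (lp_amap _))
    exact lp_add (lp_amap _) (lp_mul (lp_nat _) lp_hbar)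

lemma fact_ne (m : ℕ) : ((Nat.factorial m : ℕ) : Kf n) ≠ 0 :=
  Nat.cast_ne_zero.mpr (Nat.factorial_ne_zero m)

lemma S_eq (i : Fin n) (d a : ℕ) :
    ∑ m ∈ Finset.range (a + 1),
        algebraMap (Kf n) (Lf n)
            (alpha n i ^ m / (Nat.factorial m : Kf n)
              * ((d : Kf n) ^ (a - m) / (Nat.factorial (a - m) : Kf n)))
          * hbar n ^ (a - m)
      = algebraMap (Kf n) (Lf n) ((Nat.factorial a : Kf n))⁻¹
          * (algebraMap (Kf n) (Lf n) (alpha n i) + (d : Lf n) * hbar n) ^ a := by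
  rw [add_pow, Finset.mul_sum]
  refine Finset.sum_congr rfl fun m hm => ?_
  have hma : m ≤ a := Nat.lt_succ_iff.mp (Finset.mem_range.mp hm)
  have hch : (Nat.choose a m * Nat.factorial m * Nat.factorial (a - m) = Nat.factorial a) :=
    Nat.choose_mul_factorial_mul_factorial hma
  have hchK : ((Nat.choose a m : ℕ) : Kf n) * ((Nat.factorial m : ℕ) : Kf n)
      * ((Nat.factorial (a - m) : ℕ) : Kf n) = ((Nat.factorial a : ℕ) : Kf n) := by
    exact_mod_cast congrArg (fun t : ℕ => ((t : ℕ) : Kf n)) hch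
  have hsc : alpha n i ^ m / (Nat.factorial m : Kf n)
        * ((d : Kf n) ^ (a - m) / (Nat.factorial (a - m) : Kf n))
      = ((Nat.factorial a : Kf n))⁻¹
          * (alpha n i ^ m * ((d : Kf n) ^ (a - m) * (Nat.choose a m : Kf n))) := by
    have hc0 : ((Nat.choose a m : ℕ) : Kf n) ≠ 0 :=
      Nat.cast_ne_zero.mpr (Nat.choose_pos hma).ne'
    rw [← hchK]
    field_simp [fact_ne, hc0]
  rw [hsc]
  rw [map_mul (algebraMap (Kf n) (Lf n)), map_mul (algebraMap (Kf n) (Lf n)),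
    map_pow (algebraMap (Kf n) (Lf n)), map_mul (algebraMap (Kf n) (Lf n)),
    map_pow (algebraMap (Kf n) (Lf n)), map_natCast (algebraMap (Kf n) (Lf n)),
    map_natCast (algebraMap (Kf n) (Lf n)), mul_pow]
  ring

lemma phi_repr (eta : Fin n → Kf n) (F F' : Fin n → PowerSeries (Lf n)) (a D : ℕ) :
    PhiCoeff n eta F F' a D
      = ∑ i : Fin n, ∑ d ∈ Finset.range (D + 1),
          algebraMap (Kf n) (Lf n)
              (eta i / (∏ k ∈ Finset.univ.erase i, (alpha n i - alpha n k)))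
            * algebraMap (Kf n) (Lf n) ((Nat.factorial a : Kf n))⁻¹
            * (algebraMap (Kf n) (Lf n) (alpha n i) + (d : Lf n) * hbar n) ^ a
            * PowerSeries.coeff (R := Lf n) d (F i)
            * negH n (PowerSeries.coeff (R := Lf n) (D - d) (F' i)) := by
  unfold PhiCoeff
  refine Finset.sum_congr rfl fun i _ => Finset.sum_congr rfl fun d _ => ?_
  have step : ∑ m ∈ Finset.range (a + 1),
      algebraMap (Kf n) (Lf n)
          (eta i / (∏ k ∈ Finset.univ.erase i, (alpha n i - alpha n k))
            * (alpha n i ^ m / (Nat.factorial m : Kf n))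
            * ((d : Kf n) ^ (a - m) / (Nat.factorial (a - m) : Kf n)))
        * hbar n ^ (a - m)
        * PowerSeries.coeff (R := Lf n) d (F i)
        * negH n (PowerSeries.coeff (R := Lf n) (D - d) (F' i))
    = (∑ m ∈ Finset.range (a + 1),
        algebraMap (Kf n) (Lf n)
            (alpha n i ^ m / (Nat.factorial m : Kf n)
              * ((d : Kf n) ^ (a - m) / (Nat.factorial (a - m) : Kf n)))
          * hbar n ^ (a - m))
      * (algebraMap (Kf n) (Lf n)
            (eta i / (∏ k ∈ Finset.univ.erase i, (alpha n i - alpha n k)))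
          * PowerSeries.coeff (R := Lf n) d (F i)
          * negH n (PowerSeries.coeff (R := Lf n) (D - d) (F' i))) := by
    rw [Finset.sum_mul]
    refine Finset.sum_congr rfl fun m _ => ?_
    simp only [map_mul]
    ring
  rw [step, S_eq]
  ring
lemma fact_succ_inv (a : ℕ) :
    ((a + 1 : ℕ) : Lf n) * algebraMap (Kf n) (Lf n) ((Nat.factorial (a + 1) : Kf n))⁻¹
      = algebraMap (Kf n) (Lf n) ((Nat.factorial a : Kf n))⁻¹ := by
  rw [← map_natCast (algebraMap (Kf n) (Lf n)) (a + 1), ← map_mul (algebraMap (Kf n) (Lf n))]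
  congr 1
  have ha1 : ((a + 1 : ℕ) : Kf n) ≠ 0 := Nat.cast_ne_zero.mpr (Nat.succ_ne_zero a)
  rw [Nat.factorial_succ]
  push_cast
  push_cast at ha1
  rw [mul_inv, ← mul_assoc, mul_inv_cancel₀ ha1, one_mul]

lemma phi_dop (eta : Fin n → Kf n) (F F' : Fin n → PowerSeries (Lf n)) (a D : ℕ) :
    PhiCoeff n eta F (DOp n F') a D
      = ((a + 1 : ℕ) : Lf n) * PhiCoeff n eta F F' (a + 1) D
        - (D : Lf n) * hbar n * PhiCoeff n eta F F' a D := by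
  rw [phi_repr, phi_repr, phi_repr, Finset.mul_sum, Finset.mul_sum, ← Finset.sum_sub_distrib]
  refine Finset.sum_congr rfl fun i _ => ?_
  rw [Finset.mul_sum, Finset.mul_sum, ← Finset.sum_sub_distrib]
  refine Finset.sum_congr rfl fun d hd => ?_
  have hdD : d ≤ D := Nat.lt_succ_iff.mp (Finset.mem_range.mp hd)
  rw [coeff_DOp, negH_M]
  have f2 : algebraMap (Kf n) (Lf n) (alpha n i) - ((D - d : ℕ) : Lf n) * hbar n
      = (algebraMap (Kf n) (Lf n) (alpha n i) + (d : Lf n) * hbar n)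
        - (D : Lf n) * hbar n := by
    rw [Nat.cast_sub hdD]
    ring
  rw [f2, ← fact_succ_inv a]
  ring
theorem part2 (eta : Fin n → Kf n) (F F' : Fin n → PowerSeries (Lf n))
    (h : MPC n eta F F') : MPC n eta F (DOp n F') := by
  intro a D
  rw [phi_dop]
  obtain ⟨P1, h1⟩ := h (a + 1) D
  obtain ⟨P2, h2⟩ := h a D
  refine ⟨Polynomial.C ((a + 1 : ℕ) : Kf n) * P1
    - Polynomial.C ((D : ℕ) : Kf n) * Polynomial.X * P2, ?_⟩
  rw [h1, h2, map_sub, map_mul, map_mul, map_mul, Polynomial.aeval_C, Polynomial.aeval_C,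
    Polynomial.aeval_X, map_natCast (algebraMap (Kf n) (Lf n)),
    map_natCast (algebraMap (Kf n) (Lf n))]

/-- Lemma `Phistr_lmm4`(i): if each `F(αᵢ,ħ,q)` has all its `q`-coefficients
rational in `ħ` and `F′` is `C`-recursive, then `{x + ħ q d/dq}F′` is `C`-recursive; and if
moreover `(F,F′)` satisfies the `η`-MPC, then so does `(F, {x + ħ q d/dq}F′)`. -/
theorem statement1 (n : ℕ) (hn : 1 ≤ n)
    (C : ℕ → Fin n → Fin n → Kf n)
    (eta : Fin n → Kf n) (heta : ∀ i : Fin n, eta i ≠ 0)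
    (F F' : Fin n → PowerSeries (Lf n))
    (hF : ∀ i : Fin n, ∀ d : ℕ, IsRatH n (PowerSeries.coeff (R := Lf n) d (F i)))
    (hrec : CRecursive n C F') :
    CRecursive n C (DOp n F') ∧
      (MPC n eta F F' → MPC n eta F (DOp n F')) :=
  ⟨part1 C F' hrec, fun h => part2 eta F F' h⟩

end SQ
end
end

section
/- İ_{ℓ⁻(a)}(q) = Ï_{ℓ⁺(a)}(q) = ∑_{d≥0} q^d · [∏_{a_k>0} (a_k d)! · ∏_{a_k<0} ((−1)^{|a_k| d}·(|a_k| d)!)] / (d!)^n as power series in ℚ[[q]]. -/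
/-!
Setting: `Rw = ℚ(w)` is the field of rational functions of `w`, and power series in `q` over
`Rw` model `ℚ(w)[[q]]`.  The operator `𝔻H = H + (q/w)∂H/∂q` multiplies the `q^d`-coefficient
by `1 + d/w`, and `𝕄H = 𝔻(H/H(0,q))`, where `H(0,q)` is obtained by evaluating each
coefficient at `w = 0`.  The hypergeometric series `Ḟ`, `F̈`, `F` and the series
`İ_s = (𝕄^s Ḟ)(0,q)`, `Ï_s = (𝕄^s F̈)(0,q)`, `I_s = (𝕄^s F)(0,q)` are as in the paper, for a
tuple `a : Fin l → ℤ` of nonzero integers with `∑ |a_k| = n` (the Calabi–Yau case).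
-/

noncomputable section

namespace SQ

/-- `ℚ(w)`. -/
abbrev Rw : Type := RatFunc ℚ

/-- The variable `w`. -/
def w : Rw := RatFunc.X

/-- Evaluation of a rational function of `w` at `w = 0` (junk value if not regular there). -/
def ev0 (f : Rw) : ℚ := RatFunc.eval (RingHom.id ℚ) 0 f

/-- The operator `𝔻H = H + (q/w)·∂H/∂q` on `ℚ(w)[[q]]`: `(𝔻H)_d = (1 + d·w⁻¹)·H_d`. -/
def DD (H : PowerSeries Rw) : PowerSeries Rw :=
  PowerSeries.mk fun d => (1 + (d : Rw) * w⁻¹) * PowerSeries.coeff (R := Rw) d H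

/-- `H(0,q) ∈ ℚ[[q]] ⊂ ℚ(w)[[q]]`: each coefficient of `H` evaluated at `w = 0`. -/
def ev0Series (H : PowerSeries Rw) : PowerSeries Rw :=
  PowerSeries.mk fun d => algebraMap ℚ Rw (ev0 (PowerSeries.coeff (R := Rw) d H))

/-- `𝕄H = 𝔻(H / H(0,q))`. -/
def MM (H : PowerSeries Rw) : PowerSeries Rw := DD (H * (ev0Series H)⁻¹)

/-- `ℓ⁺(a) = #{k : a_k > 0}`. -/
def ellPlus (l : ℕ) (a : Fin l → ℤ) : ℕ := (Finset.univ.filter fun k => 0 < a k).card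

/-- `ℓ⁻(a) = #{k : a_k < 0}`. -/
def ellMinus (l : ℕ) (a : Fin l → ℤ) : ℕ := (Finset.univ.filter fun k => a k < 0).card

/-- `a^a = ∏_k a_k^{|a_k|}`. -/
def aPowA (l : ℕ) (a : Fin l → ℤ) : ℤ := ∏ k : Fin l, a k ^ (a k).natAbs

/-- The hypergeometric series `Ḟ(w,q)`. -/
def Fdot (l n : ℕ) (a : Fin l → ℤ) : PowerSeries Rw :=
  PowerSeries.mk fun d =>
    (∏ k : Fin l,
        if 0 < a k then
          ∏ r ∈ Finset.range ((a k).toNat * d), ((a k : Rw) * w + ((r : Rw) + 1))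
        else
          ∏ r ∈ Finset.range ((a k).natAbs * d), ((a k : Rw) * w - (r : Rw)))
      / ∏ r ∈ Finset.range d, ((w + ((r : Rw) + 1)) ^ n - w ^ n)

/-- The hypergeometric series `F̈(w,q)`. -/
def Fddot (l n : ℕ) (a : Fin l → ℤ) : PowerSeries Rw :=
  PowerSeries.mk fun d =>
    (∏ k : Fin l,
        if 0 < a k then
          ∏ r ∈ Finset.range ((a k).toNat * d), ((a k : Rw) * w + (r : Rw))
        else
          ∏ r ∈ Finset.range ((a k).natAbs * d), ((a k : Rw) * w - ((r : Rw) + 1)))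
      / ∏ r ∈ Finset.range d, ((w + ((r : Rw) + 1)) ^ n - w ^ n)

/-- The hypergeometric series `F(w,q)`. -/
def Fhat (l n : ℕ) (a : Fin l → ℤ) : PowerSeries Rw :=
  PowerSeries.mk fun d =>
    (∏ k : Fin l,
        if 0 < a k then
          ∏ r ∈ Finset.range ((a k).toNat * d), ((a k : Rw) * w + ((r : Rw) + 1))
        else
          ∏ r ∈ Finset.range ((a k).natAbs * d), ((a k : Rw) * w - ((r : Rw) + 1)))
      / ∏ r ∈ Finset.range d, (w + ((r : Rw) + 1)) ^ (n : ℕ)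

/-- `İ_s(q) = (𝕄^s Ḟ)(0,q) ∈ ℚ[[q]]`. -/
def Idot (l n : ℕ) (a : Fin l → ℤ) (s : ℕ) : PowerSeries ℚ :=
  PowerSeries.mk fun d => ev0 (PowerSeries.coeff (R := Rw) d (MM^[s] (Fdot l n a)))

/-- `Ï_s(q) = (𝕄^s F̈)(0,q) ∈ ℚ[[q]]`. -/
def Iddot (l n : ℕ) (a : Fin l → ℤ) (s : ℕ) : PowerSeries ℚ :=
  PowerSeries.mk fun d => ev0 (PowerSeries.coeff (R := Rw) d (MM^[s] (Fddot l n a)))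

/-- `I_s(q) = (𝕄^s F)(0,q) ∈ ℚ[[q]]`. -/
def Ihat (l n : ℕ) (a : Fin l → ℤ) (s : ℕ) : PowerSeries ℚ :=
  PowerSeries.mk fun d => ev0 (PowerSeries.coeff (R := Rw) d (MM^[s] (Fhat l n a)))

section Aux

abbrev aM : Polynomial ℚ →+* Rw := algebraMap (Polynomial ℚ) Rw
lemma aM_X : aM Polynomial.X = w := rfl
lemma ev0_one : ev0 (1 : Rw) = 1 := RatFunc.eval_one _ _
lemma eval₂_id_zero (p : Polynomial ℚ) : Polynomial.eval₂ (RingHom.id ℚ) 0 p = p.eval 0 := rfl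
lemma ev0_aM (p : Polynomial ℚ) : ev0 (aM p) = p.eval 0 := by
  rw [ev0, RatFunc.eval_algebraMap]
  simp [eval₂_id_zero, Polynomial.coeff_zero_eq_eval_zero]
lemma ev0_div (P Q : Polynomial ℚ) (hQ : Q.eval 0 ≠ 0) :
    ev0 (aM P / aM Q) = P.eval 0 / Q.eval 0 := by
  have hQ0 : Q ≠ 0 := fun h => hQ (by simp [h])
  have hdvd : RatFunc.denom (aM P / aM Q) ∣ Q := RatFunc.denom_div_dvd P Q
  have hden : Polynomial.eval₂ (RingHom.id ℚ) 0 (RatFunc.denom (aM P / aM Q)) ≠ 0 := by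
    rw [eval₂_id_zero]
    intro h
    obtain ⟨t, ht⟩ := hdvd
    exact hQ (by rw [ht, Polynomial.eval_mul, h, zero_mul])
  have hmul : (aM P / aM Q) * aM Q = aM P := by
    rw [div_mul_cancel₀]
    exact RatFunc.algebraMap_ne_zero hQ0
  have hQden : Polynomial.eval₂ (RingHom.id ℚ) 0 (RatFunc.denom (aM Q)) ≠ 0 := by
    rw [RatFunc.denom_algebraMap]; simp
  have := RatFunc.eval_mul (f := RingHom.id ℚ) (a := 0) hden hQden
  rw [hmul] at this
  have h1 : ev0 (aM P) = ev0 (aM P / aM Q) * ev0 (aM Q) := this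
  rw [ev0_aM, ev0_aM] at h1
  field_simp [h1]
  exact h1.symm

lemma ev0Series_eq_one (H : PowerSeries Rw) (h0 : PowerSeries.coeff (R := Rw) 0 H = 1)
    (h : ∀ d, 0 < d → ev0 (PowerSeries.coeff (R := Rw) d H) = 0) : ev0Series H = 1 := by
  ext d
  rw [ev0Series, PowerSeries.coeff_mk, PowerSeries.coeff_one]
  rcases Nat.eq_zero_or_pos d with hd | hd
  · subst hd; simp [h0, ev0_one]
  · rw [h d hd, if_neg (Nat.pos_iff_ne_zero.mp hd)]; simp

lemma MM_eq_DD (H : PowerSeries Rw) (h0 : PowerSeries.coeff (R := Rw) 0 H = 1)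
    (h : ∀ d, 0 < d → ev0 (PowerSeries.coeff (R := Rw) d H) = 0) : MM H = DD H := by
  rw [MM, ev0Series_eq_one H h0 h]
  have h1 : (1 : PowerSeries Rw)⁻¹ = 1 :=
    ((PowerSeries.eq_inv_iff_mul_eq_one (by simp)).2 (by simp)).symm
  rw [h1, mul_one]

lemma key_coeff (s e : ℕ) (hse : s ≤ e) (d : ℕ) (N D : Polynomial ℚ) :
    (1 + (d : Rw) * w⁻¹) ^ s * (aM (Polynomial.X ^ e * N) / aM D)
      = aM ((Polynomial.X + (d : Polynomial ℚ)) ^ s * (Polynomial.X ^ (e - s) * N)) / aM D := by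
  have hw : w ≠ 0 := RatFunc.X_ne_zero
  have h1 : (1 + (d : Rw) * w⁻¹) = (w + d) * w⁻¹ := by field_simp
  have hsplit : (e : ℕ) = s + (e - s) := (Nat.add_sub_cancel' hse).symm
  rw [h1, mul_pow, map_mul, map_mul, map_pow, map_pow, map_add, map_natCast, aM_X,
    map_mul, map_pow, aM_X, hsplit, pow_add]
  have hcancel : w ^ s * w⁻¹ ^ s = 1 := by
    rw [inv_pow, mul_inv_cancel₀ (pow_ne_zero _ hw)]
  field_simp
  simp only [Nat.add_sub_cancel_left]
  linear_combination (w ^ (e - s) * aM N * (aM D)⁻¹ * (w + (d : Rw)) ^ s) * hcancel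

lemma MM_iterate (H : PowerSeries Rw) (e : ℕ) (N D : ℕ → Polynomial ℚ)
    (h0 : PowerSeries.coeff (R := Rw) 0 H = 1)
    (hc : ∀ d, 0 < d → PowerSeries.coeff (R := Rw) d H = aM (Polynomial.X ^ e * N d) / aM (D d))
    (hD : ∀ d, 0 < d → (D d).eval 0 ≠ 0) :
    ∀ s, s ≤ e →
      MM^[s] H = PowerSeries.mk fun d => (1 + (d : Rw) * w⁻¹) ^ s * PowerSeries.coeff (R := Rw) d H
  | 0, _ => by ext d; simp
  | (s+1), hs => by
    have hs' : s ≤ e := Nat.le_of_succ_le hs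
    rw [Function.iterate_succ_apply', MM_iterate H e N D h0 hc hD s hs']
    set G := PowerSeries.mk fun d => (1 + (d : Rw) * w⁻¹) ^ s * PowerSeries.coeff (R := Rw) d H with hG
    have hG0 : PowerSeries.coeff (R := Rw) 0 G = 1 := by simp [hG, h0]
    have hGd : ∀ d, 0 < d → ev0 (PowerSeries.coeff (R := Rw) d G) = 0 := by
      intro d hd
      rw [hG, PowerSeries.coeff_mk, hc d hd, key_coeff s e hs' d, ev0_div _ _ (hD d hd)]
      have hne : e - s ≠ 0 := Nat.sub_ne_zero_of_lt hs
      simp [Polynomial.eval_mul, Polynomial.eval_pow, zero_pow hne]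
    rw [MM_eq_DD G hG0 hGd]
    ext d
    simp only [DD, hG, PowerSeries.coeff_mk, pow_succ]
    ring

lemma ev0_MM_iterate (H : PowerSeries Rw) (e : ℕ) (N D : ℕ → Polynomial ℚ)
    (h0 : PowerSeries.coeff (R := Rw) 0 H = 1)
    (hc : ∀ d, 0 < d → PowerSeries.coeff (R := Rw) d H = aM (Polynomial.X ^ e * N d) / aM (D d))
    (hD : ∀ d, 0 < d → (D d).eval 0 ≠ 0) (d : ℕ) :
    ev0 (PowerSeries.coeff (R := Rw) d (MM^[e] H)) =
      if d = 0 then 1 else (d : ℚ) ^ e * ((N d).eval 0) / ((D d).eval 0) := by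
  rw [MM_iterate H e N D h0 hc hD e le_rfl, PowerSeries.coeff_mk]
  rcases Nat.eq_zero_or_pos d with hd | hd
  · subst hd; simp [h0, ev0_one]
  · rw [if_neg (Nat.pos_iff_ne_zero.mp hd), hc d hd, key_coeff e e le_rfl d,
      ev0_div _ _ (hD d hd)]
    simp [Polynomial.eval_mul, Polynomial.eval_pow]


def Dpoly (n d : ℕ) : Polynomial ℚ :=
  ∏ r ∈ Finset.range d, ((Polynomial.X + ((r : Polynomial ℚ) + 1)) ^ n - Polynomial.X ^ n)

def Ndot (l : ℕ) (a : Fin l → ℤ) (d : ℕ) : Polynomial ℚ :=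
  ∏ k : Fin l,
    if 0 < a k then
      ∏ r ∈ Finset.range ((a k).toNat * d),
        ((a k : Polynomial ℚ) * Polynomial.X + ((r : Polynomial ℚ) + 1))
    else
      (a k : Polynomial ℚ) *
        ∏ r ∈ Finset.range ((a k).natAbs * d - 1),
          ((a k : Polynomial ℚ) * Polynomial.X - ((r : Polynomial ℚ) + 1))

def Nddot (l : ℕ) (a : Fin l → ℤ) (d : ℕ) : Polynomial ℚ :=
  ∏ k : Fin l,
    if 0 < a k then
      (a k : Polynomial ℚ) *
        ∏ r ∈ Finset.range ((a k).toNat * d - 1),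
          ((a k : Polynomial ℚ) * Polynomial.X + ((r : Polynomial ℚ) + 1))
    else
      ∏ r ∈ Finset.range ((a k).natAbs * d),
        ((a k : Polynomial ℚ) * Polynomial.X - ((r : Polynomial ℚ) + 1))

lemma aM_Dpoly (n d : ℕ) :
    aM (Dpoly n d) = ∏ r ∈ Finset.range d, ((w + ((r : Rw) + 1)) ^ n - w ^ n) := by
  rw [Dpoly, map_prod]
  refine Finset.prod_congr rfl fun r _ => ?_
  simp [aM_X, w]

lemma prod_ite_pow_pos {M : Type*} [CommMonoid M] (l : ℕ) (a : Fin l → ℤ) (c : M) :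
    (∏ k : Fin l, if 0 < a k then c else 1) = c ^ ellPlus l a := by
  rw [Finset.prod_ite, Finset.prod_const, Finset.prod_const_one, mul_one, ellPlus]

lemma prod_ite_pow_neg {M : Type*} [CommMonoid M] (l : ℕ) (a : Fin l → ℤ)
    (ha : ∀ k, a k ≠ 0) (c : M) :
    (∏ k : Fin l, if 0 < a k then 1 else c) = c ^ ellMinus l a := by
  have hfil : (Finset.univ.filter fun k => ¬ 0 < a k) =
      Finset.univ.filter fun k : Fin l => a k < 0 :=
    Finset.filter_congr (fun k _ => by have := ha k; omega)
  rw [Finset.prod_ite, Finset.prod_const_one, one_mul, Finset.prod_const, hfil, ellMinus]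

lemma cast_factorial_prod (m : ℕ) :
    ∏ r ∈ Finset.range m, ((r : ℚ) + 1) = (m.factorial : ℚ) := by
  rw [← Finset.prod_range_add_one_eq_factorial m]
  push_cast
  rfl

lemma neg_factorial_prod (t : ℕ) :
    ∏ r ∈ Finset.range t, (-((r : ℚ) + 1)) = (-1) ^ t * (t.factorial : ℚ) := by
  calc ∏ r ∈ Finset.range t, (-((r : ℚ) + 1))
      = ∏ r ∈ Finset.range t, ((-1) * ((r : ℚ) + 1)) := by
        refine Finset.prod_congr rfl fun r _ => by ring
    _ = (-1) ^ t * (t.factorial : ℚ) := by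
        rw [Finset.prod_mul_distrib, Finset.prod_const, cast_factorial_prod, Finset.card_range]

lemma Dpoly_eval (n d : ℕ) (hn : 1 ≤ n) :
    (Dpoly n d).eval 0 = ((d.factorial : ℚ)) ^ n := by
  rw [Dpoly, Polynomial.eval_prod]
  have h : ∀ r ∈ Finset.range d,
      Polynomial.eval 0 ((Polynomial.X + ((r : Polynomial ℚ) + 1)) ^ n - Polynomial.X ^ n)
        = ((r : ℚ) + 1) ^ n := by
    intro r _
    simp [zero_pow (by omega : n ≠ 0)]
  rw [Finset.prod_congr rfl h, ← cast_factorial_prod, Finset.prod_pow]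


lemma Fdot_num (l : ℕ) (a : Fin l → ℤ) (ha : ∀ k, a k ≠ 0) (d : ℕ) (hd : 0 < d) :
    (∏ k : Fin l,
        if 0 < a k then
          ∏ r ∈ Finset.range ((a k).toNat * d), ((a k : Rw) * w + ((r : Rw) + 1))
        else
          ∏ r ∈ Finset.range ((a k).natAbs * d), ((a k : Rw) * w - (r : Rw)))
      = aM (Polynomial.X ^ ellMinus l a * Ndot l a d) := by
  have hfac : ∀ k : Fin l,
      (if 0 < a k then
          ∏ r ∈ Finset.range ((a k).toNat * d), ((a k : Rw) * w + ((r : Rw) + 1))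
        else
          ∏ r ∈ Finset.range ((a k).natAbs * d), ((a k : Rw) * w - (r : Rw)))
      = (if 0 < a k then 1 else w) *
        aM (if 0 < a k then
              ∏ r ∈ Finset.range ((a k).toNat * d),
                ((a k : Polynomial ℚ) * Polynomial.X + ((r : Polynomial ℚ) + 1))
            else
              (a k : Polynomial ℚ) *
                ∏ r ∈ Finset.range ((a k).natAbs * d - 1),
                  ((a k : Polynomial ℚ) * Polynomial.X - ((r : Polynomial ℚ) + 1))) := by
    intro k
    by_cases hk : 0 < a k
    · rw [if_pos hk, if_pos hk, if_pos hk, one_mul, map_prod]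
      refine Finset.prod_congr rfl fun r _ => ?_
      simp [aM_X, w]
    · rw [if_neg hk, if_neg hk, if_neg hk]
      have hm : (a k).natAbs * d = ((a k).natAbs * d - 1) + 1 := by
        have : 0 < (a k).natAbs * d := Nat.mul_pos (Int.natAbs_pos.mpr (ha k)) hd
        omega
      rw [hm, Finset.prod_range_succ', map_mul, map_intCast, map_prod]
      simp only [Nat.add_sub_cancel]
      have hterm : ∀ x ∈ Finset.range ((a k).natAbs * d - 1),
          aM ((a k : Polynomial ℚ) * Polynomial.X - ((x : Polynomial ℚ) + 1))
            = (a k : Rw) * w - ((x : Rw) + 1) := by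
        intro x _
        simp [aM_X, w]
      rw [Finset.prod_congr rfl hterm]
      push_cast
      ring
  calc (∏ k : Fin l,
        if 0 < a k then
          ∏ r ∈ Finset.range ((a k).toNat * d), ((a k : Rw) * w + ((r : Rw) + 1))
        else
          ∏ r ∈ Finset.range ((a k).natAbs * d), ((a k : Rw) * w - (r : Rw)))
      = (∏ k : Fin l, if 0 < a k then (1 : Rw) else w) *
          ∏ k : Fin l, aM (if 0 < a k then
              ∏ r ∈ Finset.range ((a k).toNat * d),
                ((a k : Polynomial ℚ) * Polynomial.X + ((r : Polynomial ℚ) + 1))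
            else
              (a k : Polynomial ℚ) *
                ∏ r ∈ Finset.range ((a k).natAbs * d - 1),
                  ((a k : Polynomial ℚ) * Polynomial.X - ((r : Polynomial ℚ) + 1))) := by
        rw [Finset.prod_congr rfl fun k _ => hfac k, Finset.prod_mul_distrib]
    _ = aM (Polynomial.X ^ ellMinus l a * Ndot l a d) := by
        rw [prod_ite_pow_neg l a ha, ← map_prod, map_mul, map_pow, aM_X, Ndot]

lemma Fddot_num (l : ℕ) (a : Fin l → ℤ) (ha : ∀ k, a k ≠ 0) (d : ℕ) (hd : 0 < d) :
    (∏ k : Fin l,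
        if 0 < a k then
          ∏ r ∈ Finset.range ((a k).toNat * d), ((a k : Rw) * w + (r : Rw))
        else
          ∏ r ∈ Finset.range ((a k).natAbs * d), ((a k : Rw) * w - ((r : Rw) + 1)))
      = aM (Polynomial.X ^ ellPlus l a * Nddot l a d) := by
  have hfac : ∀ k : Fin l,
      (if 0 < a k then
          ∏ r ∈ Finset.range ((a k).toNat * d), ((a k : Rw) * w + (r : Rw))
        else
          ∏ r ∈ Finset.range ((a k).natAbs * d), ((a k : Rw) * w - ((r : Rw) + 1)))
      = (if 0 < a k then w else 1) *
        aM (if 0 < a k then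
              (a k : Polynomial ℚ) *
                ∏ r ∈ Finset.range ((a k).toNat * d - 1),
                  ((a k : Polynomial ℚ) * Polynomial.X + ((r : Polynomial ℚ) + 1))
            else
              ∏ r ∈ Finset.range ((a k).natAbs * d),
                ((a k : Polynomial ℚ) * Polynomial.X - ((r : Polynomial ℚ) + 1))) := by
    intro k
    by_cases hk : 0 < a k
    · rw [if_pos hk, if_pos hk, if_pos hk]
      have hm : (a k).toNat * d = ((a k).toNat * d - 1) + 1 := by
        have : 0 < (a k).toNat * d := Nat.mul_pos (by omega) hd
        omega
      rw [hm, Finset.prod_range_succ', map_mul, map_intCast, map_prod]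
      simp only [Nat.add_sub_cancel]
      have hterm : ∀ x ∈ Finset.range ((a k).toNat * d - 1),
          aM ((a k : Polynomial ℚ) * Polynomial.X + ((x : Polynomial ℚ) + 1))
            = (a k : Rw) * w + ((x : Rw) + 1) := by
        intro x _
        simp [aM_X, w]
      rw [Finset.prod_congr rfl hterm]
      push_cast
      ring
    · rw [if_neg hk, if_neg hk, if_neg hk, one_mul, map_prod]
      refine Finset.prod_congr rfl fun r _ => ?_
      simp [aM_X, w]
  calc (∏ k : Fin l,
        if 0 < a k then
          ∏ r ∈ Finset.range ((a k).toNat * d), ((a k : Rw) * w + (r : Rw))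
        else
          ∏ r ∈ Finset.range ((a k).natAbs * d), ((a k : Rw) * w - ((r : Rw) + 1)))
      = (∏ k : Fin l, if 0 < a k then w else (1 : Rw)) *
          ∏ k : Fin l, aM (if 0 < a k then
              (a k : Polynomial ℚ) *
                ∏ r ∈ Finset.range ((a k).toNat * d - 1),
                  ((a k : Polynomial ℚ) * Polynomial.X + ((r : Polynomial ℚ) + 1))
            else
              ∏ r ∈ Finset.range ((a k).natAbs * d),
                ((a k : Polynomial ℚ) * Polynomial.X - ((r : Polynomial ℚ) + 1))) := by
        rw [Finset.prod_congr rfl fun k _ => hfac k, Finset.prod_mul_distrib]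
    _ = aM (Polynomial.X ^ ellPlus l a * Nddot l a d) := by
        rw [prod_ite_pow_pos l a, ← map_prod, map_mul, map_pow, aM_X, Nddot]


def targetNum (l : ℕ) (a : Fin l → ℤ) (d : ℕ) : ℚ :=
  ∏ k : Fin l,
    if 0 < a k then (((a k).toNat * d).factorial : ℚ)
    else (-1 : ℚ) ^ ((a k).natAbs * d) * (((a k).natAbs * d).factorial : ℚ)

lemma Ndot_eval (l : ℕ) (a : Fin l → ℤ) (ha : ∀ k, a k ≠ 0) (d : ℕ) (hd : 0 < d) :
    (d : ℚ) ^ ellMinus l a * (Ndot l a d).eval 0 = targetNum l a d := by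
  rw [Ndot, Polynomial.eval_prod, ← prod_ite_pow_neg l a ha ((d : ℚ)),
    ← Finset.prod_mul_distrib, targetNum]
  refine Finset.prod_congr rfl fun k _ => ?_
  by_cases hk : 0 < a k
  · rw [if_pos hk, if_pos hk, if_pos hk, one_mul, Polynomial.eval_prod]
    have h : ∀ r ∈ Finset.range ((a k).toNat * d),
        Polynomial.eval 0 ((a k : Polynomial ℚ) * Polynomial.X + ((r : Polynomial ℚ) + 1))
          = ((r : ℚ) + 1) := by intro r _; simp
    rw [Finset.prod_congr rfl h, cast_factorial_prod]
  · rw [if_neg hk, if_neg hk, if_neg hk, Polynomial.eval_mul, Polynomial.eval_prod]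
    have h : ∀ r ∈ Finset.range ((a k).natAbs * d - 1),
        Polynomial.eval 0 ((a k : Polynomial ℚ) * Polynomial.X - ((r : Polynomial ℚ) + 1))
          = -((r : ℚ) + 1) := by intro r _; simp
    rw [Finset.prod_congr rfl h, neg_factorial_prod]
    obtain ⟨t, ht⟩ : ∃ t, (a k).natAbs * d = t + 1 := by
      have : 0 < (a k).natAbs * d := Nat.mul_pos (Int.natAbs_pos.mpr (ha k)) hd
      exact ⟨(a k).natAbs * d - 1, by omega⟩
    have hcast : ((a k : ℤ) : ℚ) = -(((a k).natAbs : ℕ) : ℚ) := by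
      have h1 : (a k : ℤ) = -((a k).natAbs : ℤ) := by omega
      exact_mod_cast congrArg (Int.cast : ℤ → ℚ) h1
    have hmd : (((a k).natAbs : ℕ) : ℚ) * (d : ℚ) = (t : ℚ) + 1 := by
      exact_mod_cast congrArg (Nat.cast : ℕ → ℚ) ht
    rw [ht, Polynomial.eval_intCast, hcast]
    simp only [Nat.add_sub_cancel]
    push_cast [Nat.factorial_succ, pow_succ]
    linear_combination (-(-1 : ℚ) ^ t * (t.factorial : ℚ)) * hmd

lemma Nddot_eval (l : ℕ) (a : Fin l → ℤ) (ha : ∀ k, a k ≠ 0) (d : ℕ) (hd : 0 < d) :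
    (d : ℚ) ^ ellPlus l a * (Nddot l a d).eval 0 = targetNum l a d := by
  rw [Nddot, Polynomial.eval_prod, ← prod_ite_pow_pos l a ((d : ℚ)),
    ← Finset.prod_mul_distrib, targetNum]
  refine Finset.prod_congr rfl fun k _ => ?_
  by_cases hk : 0 < a k
  · rw [if_pos hk, if_pos hk, if_pos hk, Polynomial.eval_mul, Polynomial.eval_prod]
    have h : ∀ r ∈ Finset.range ((a k).toNat * d - 1),
        Polynomial.eval 0 ((a k : Polynomial ℚ) * Polynomial.X + ((r : Polynomial ℚ) + 1))
          = ((r : ℚ) + 1) := by intro r _; simp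
    rw [Finset.prod_congr rfl h, cast_factorial_prod]
    obtain ⟨t, ht⟩ : ∃ t, (a k).toNat * d = t + 1 := by
      have : 0 < (a k).toNat * d := Nat.mul_pos (by omega) hd
      exact ⟨(a k).toNat * d - 1, by omega⟩
    have hcast : ((a k : ℤ) : ℚ) = (((a k).toNat : ℕ) : ℚ) := by
      have h1 : (a k : ℤ) = ((a k).toNat : ℤ) := by omega
      exact_mod_cast congrArg (Int.cast : ℤ → ℚ) h1
    have hmd : (((a k).toNat : ℕ) : ℚ) * (d : ℚ) = (t : ℚ) + 1 := by
      exact_mod_cast congrArg (Nat.cast : ℕ → ℚ) ht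
    rw [ht, Polynomial.eval_intCast, hcast]
    simp only [Nat.add_sub_cancel]
    push_cast [Nat.factorial_succ]
    linear_combination ((t.factorial : ℚ)) * hmd
  · rw [if_neg hk, if_neg hk, if_neg hk, one_mul, Polynomial.eval_prod]
    have h : ∀ r ∈ Finset.range ((a k).natAbs * d),
        Polynomial.eval 0 ((a k : Polynomial ℚ) * Polynomial.X - ((r : Polynomial ℚ) + 1))
          = -((r : ℚ) + 1) := by intro r _; simp
    rw [Finset.prod_congr rfl h, neg_factorial_prod]


end Aux

/-- `İ_{ℓ⁻(a)}(q) = Ï_{ℓ⁺(a)}(q)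
  = ∑_d q^d [∏_{a_k>0}(a_k d)! ∏_{a_k<0}((−1)^{|a_k|d}(|a_k|d)!)]/(d!)^n` in `ℚ[[q]]`. -/
theorem statement11 (l n : ℕ) (hn : 1 ≤ n) (a : Fin l → ℤ) (ha : ∀ k, a k ≠ 0)
    (hCY : ∑ k : Fin l, (a k).natAbs = n) :
    Idot l n a (ellMinus l a)
        = PowerSeries.mk (fun d =>
            (∏ k : Fin l,
                if 0 < a k then (((a k).toNat * d).factorial : ℚ)
                else (-1 : ℚ) ^ ((a k).natAbs * d) * (((a k).natAbs * d).factorial : ℚ))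
              / ((d.factorial : ℚ)) ^ n) ∧
    Iddot l n a (ellPlus l a)
        = PowerSeries.mk (fun d =>
            (∏ k : Fin l,
                if 0 < a k then (((a k).toNat * d).factorial : ℚ)
                else (-1 : ℚ) ^ ((a k).natAbs * d) * (((a k).natAbs * d).factorial : ℚ))
              / ((d.factorial : ℚ)) ^ n) := by
  have hDne : ∀ d, 0 < d → (Dpoly n d).eval 0 ≠ 0 := by
    intro d hd
    rw [Dpoly_eval n d hn]
    exact pow_ne_zero _ (Nat.cast_ne_zero.mpr d.factorial_ne_zero)
  constructor
  · ext d
    simp only [Idot, PowerSeries.coeff_mk]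
    have h0 : PowerSeries.coeff (R := Rw) 0 (Fdot l n a) = 1 := by simp [Fdot]
    have hc : ∀ e, 0 < e → PowerSeries.coeff (R := Rw) e (Fdot l n a)
        = aM (Polynomial.X ^ ellMinus l a * Ndot l a e) / aM (Dpoly n e) := by
      intro e he
      simp only [Fdot, PowerSeries.coeff_mk]
      rw [Fdot_num l a ha e he, aM_Dpoly]
    rw [ev0_MM_iterate (Fdot l n a) (ellMinus l a) (Ndot l a) (Dpoly n) h0 hc hDne d]
    rcases Nat.eq_zero_or_pos d with hd | hd
    · subst hd
      simp
    · rw [if_neg (Nat.pos_iff_ne_zero.mp hd), Dpoly_eval n d hn, Ndot_eval l a ha d hd,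
        targetNum]
  · ext d
    simp only [Iddot, PowerSeries.coeff_mk]
    have h0 : PowerSeries.coeff (R := Rw) 0 (Fddot l n a) = 1 := by simp [Fddot]
    have hc : ∀ e, 0 < e → PowerSeries.coeff (R := Rw) e (Fddot l n a)
        = aM (Polynomial.X ^ ellPlus l a * Nddot l a e) / aM (Dpoly n e) := by
      intro e he
      simp only [Fddot, PowerSeries.coeff_mk]
      rw [Fddot_num l a ha e he, aM_Dpoly]
    rw [ev0_MM_iterate (Fddot l n a) (ellPlus l a) (Nddot l a) (Dpoly n) h0 hc hDne d]
    rcases Nat.eq_zero_or_pos d with hd | hd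
    · subst hd
      simp
    · rw [if_neg (Nat.pos_iff_ne_zero.mp hd), Dpoly_eval n d hn, Nddot_eval l a ha d hd,
        targetNum]

end SQ
end
end

section
/- For each i ∈ {1,…,n} there exists a unique power series L_i ∈ ℚ_α[[q]] with constant term α_i satisfying ∏_{k=1}^{n}(L_i − α_k) = q·a^a·L_i^{|a|}; moreover, in the polynomial ring ℚ_α[[q]][Y], ∏_{k=1}^{n}(Y − α_k) − q·a^a·Y^{|a|} = c(q)·∏_{i=1}^{n}(Y − L_i), where c(q) = 1 − a^a q if |a| = n and c(q) = 1 if |a| < n. -/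
/-!
Setting: `Kf n = ℚ_α = ℚ(α₁,…,αₙ)` is the field of rational functions in `n` variables over
`ℚ` (in which the `αᵢ` are pairwise distinct).  For a tuple `a : Fin l → ℤ` of nonzero
integers with `|a| = ∑|a_k| ≤ n` and `a^a = ∏ a_k^{|a_k|}`, the power series
`L_i ∈ ℚ_α[[q]]` is characterized by having constant term `αᵢ` and satisfying
`∏ₖ(L_i − αₖ) = q·a^a·L_i^{|a|}`.
-/

noncomputable section

namespace SQ

/-- `|a| = ∑ |a_k|`. -/
def absSum (l : ℕ) (a : Fin l → ℤ) : ℕ := ∑ k : Fin l, (a k).natAbs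

/-- `a^a = ∏ a_k^{|a_k|}`, as an element of `ℚ_α`. -/
def aPow (n l : ℕ) (a : Fin l → ℤ) : Kf n := ((∏ k : Fin l, a k ^ (a k).natAbs : ℤ) : Kf n)

/-- The defining property of `L_i ∈ ℚ_α[[q]]`: constant term `αᵢ` and
`∏ₖ(L − αₖ) = q·a^a·L^{|a|}`. -/
def IsLSeries (n l : ℕ) (a : Fin l → ℤ) (i : Fin n) (L : PowerSeries (Kf n)) : Prop :=
  PowerSeries.constantCoeff L = alpha n i ∧
    ∏ k : Fin n, (L - PowerSeries.C (alpha n k))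
      = PowerSeries.X * PowerSeries.C (aPow n l a) * L ^ absSum l a

lemma alpha_injective (n : ℕ) : Function.Injective (alpha n) := by
  intro i j h
  have := IsFractionRing.injective (MvPolynomial (Fin n) ℚ) (Kf n) h
  exact MvPolynomial.X_injective this

lemma deriv_nodal {K : Type*} [Field K] {n : ℕ} (α : Fin n → K) (i : Fin n) :
    (Polynomial.derivative (∏ k : Fin n, (Polynomial.X - Polynomial.C (α k)))).eval (α i)
      = ∏ k ∈ Finset.univ.erase i, (α i - α k) := by
  rw [← Finset.mul_prod_erase Finset.univ _ (Finset.mem_univ i), Polynomial.derivative_mul]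
  simp [Polynomial.eval_prod]


section Adic
variable {K : Type*} [Field K]
open PowerSeries

lemma smul_top_mem (m : ℕ) (x : PowerSeries K) :
    x ∈ ((Ideal.span {(X : PowerSeries K)}) ^ m • (⊤ : Submodule (PowerSeries K) (PowerSeries K)))
      ↔ ∀ j < m, coeff j x = 0 := by
  rw [smul_eq_mul, Ideal.mul_top, Ideal.span_singleton_pow, Ideal.mem_span_singleton,
    PowerSeries.X_pow_dvd_iff]

instance psHausdorff : IsHausdorff (Ideal.span {(X : PowerSeries K)}) (PowerSeries K) := by
  constructor
  intro x hx
  ext j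
  have := SModEq.sub_mem.mp (hx (j+1))
  rw [smul_top_mem] at this
  have := this j (by omega)
  simpa using this

instance psPrecomplete : IsPrecomplete (Ideal.span {(X : PowerSeries K)}) (PowerSeries K) := by
  constructor
  intro f hf
  refine ⟨PowerSeries.mk (fun j => coeff j (f (j+1))), fun m => ?_⟩
  rw [SModEq.sub_mem, smul_top_mem]
  intro j hj
  have := SModEq.sub_mem.mp (hf (show j+1 ≤ m from hj))
  rw [smul_top_mem] at this
  have h2 := this j (by omega)
  simp only [map_sub] at h2 ⊢
  rw [sub_eq_zero] at h2 ⊢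
  simp [h2]

instance psAdicComplete : IsAdicComplete (Ideal.span {(X : PowerSeries K)}) (PowerSeries K) := ⟨⟩
end Adic

section Main
variable (n l : ℕ) (a : Fin l → ℤ)

open Polynomial PowerSeries

abbrev R (n : ℕ) : Type := PowerSeries (Kf n)
abbrev φ (n : ℕ) : R n →+* Kf n := PowerSeries.constantCoeff

/-- the polynomial `f = ∏(Y − αₖ) − q a^a Y^m`. -/
def fpoly : Polynomial (R n) :=
  (∏ k : Fin n, (Polynomial.X - Polynomial.C (PowerSeries.C (alpha n k))))
    - Polynomial.C (PowerSeries.X * PowerSeries.C (aPow n l a))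
        * Polynomial.X ^ absSum l a

/-- the leading coefficient. -/
def cLead : R n :=
  if absSum l a = n then 1 - PowerSeries.C (aPow n l a) * PowerSeries.X else 1

lemma isLSeries_iff (i : Fin n) (L : R n) :
    IsLSeries n l a i L ↔ φ n L = alpha n i ∧ (fpoly n l a).eval L = 0 := by
  unfold IsLSeries fpoly
  simp only [Polynomial.eval_sub, Polynomial.eval_prod, Polynomial.eval_mul, Polynomial.eval_pow,
    Polynomial.eval_X, Polynomial.eval_C, sub_eq_zero]

lemma map_fpoly :
    (fpoly n l a).map (φ n) = ∏ k : Fin n, (Polynomial.X - Polynomial.C (alpha n k)) := by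
  unfold fpoly
  simp [Polynomial.map_prod]

lemma constantCoeff_deriv_eval {i : Fin n} {L : R n} (hL : φ n L = alpha n i) :
    φ n ((Polynomial.derivative (fpoly n l a)).eval L)
      = ∏ k ∈ Finset.univ.erase i, (alpha n i - alpha n k) := by
  have h1 : φ n ((Polynomial.derivative (fpoly n l a)).eval L)
      = ((Polynomial.derivative (fpoly n l a)).map (φ n)).eval (φ n L) := by
    rw [Polynomial.eval_map, Polynomial.eval₂_at_apply]
  rw [h1, ← Polynomial.derivative_map, map_fpoly, hL, deriv_nodal]

lemma constantCoeff_deriv_eval_ne_zero {i : Fin n} {L : R n} (hL : φ n L = alpha n i) :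
    φ n ((Polynomial.derivative (fpoly n l a)).eval L) ≠ 0 := by
  rw [constantCoeff_deriv_eval n l a hL]
  refine Finset.prod_ne_zero_iff.mpr fun k hk => ?_
  have hki : k ≠ i := (Finset.mem_erase.mp hk).1
  exact sub_ne_zero.mpr fun h => hki (alpha_injective n h.symm)

lemma monic_nodal : (∏ k : Fin n, (Polynomial.X - Polynomial.C (PowerSeries.C (alpha n k)))
    : Polynomial (R n)).Monic :=
  Polynomial.monic_prod_of_monic _ _ fun k _ => Polynomial.monic_X_sub_C _

lemma natDegree_nodal :
    (∏ k : Fin n, (Polynomial.X - Polynomial.C (PowerSeries.C (alpha n k)))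
      : Polynomial (R n)).natDegree = n := by
  rw [Polynomial.natDegree_prod _ _ fun k _ => Polynomial.X_sub_C_ne_zero _]
  simp

lemma coeff_fpoly_of_lt (hm : absSum l a ≤ n) {j : ℕ} (hj : n < j) :
    (fpoly n l a).coeff j = 0 := by
  unfold fpoly
  rw [Polynomial.coeff_sub, Polynomial.coeff_eq_zero_of_natDegree_lt, Polynomial.coeff_C_mul,
    Polynomial.coeff_X_pow, if_neg (by omega), mul_zero, sub_zero]
  rw [natDegree_nodal]; exact hj

lemma coeff_fpoly_n (hm : absSum l a ≤ n) :
    (fpoly n l a).coeff n = cLead n l a := by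
  unfold fpoly cLead
  rw [Polynomial.coeff_sub, Polynomial.coeff_C_mul, Polynomial.coeff_X_pow]
  have h1 : (∏ k : Fin n, (Polynomial.X - Polynomial.C (PowerSeries.C (alpha n k)))
      : Polynomial (R n)).coeff n = 1 := by
    have := (monic_nodal n).coeff_natDegree
    rwa [natDegree_nodal] at this
  rw [h1]
  by_cases h : absSum l a = n
  · rw [if_pos (by omega), if_pos h, mul_one, mul_comm]
  · rw [if_neg (by omega), if_neg h, mul_zero, sub_zero]

lemma cLead_constantCoeff : φ n (cLead n l a) = 1 := by
  unfold cLead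
  split <;> simp

lemma cLead_ne_zero : cLead n l a ≠ 0 := fun h => by
  have := cLead_constantCoeff n l a
  rw [h] at this; simp at this

lemma cLead_isUnit : IsUnit (cLead n l a) := by
  rw [PowerSeries.isUnit_iff_constantCoeff, cLead_constantCoeff]
  exact isUnit_one

lemma natDegree_fpoly (hm : absSum l a ≤ n) : (fpoly n l a).natDegree = n := by
  refine le_antisymm (Polynomial.natDegree_le_iff_coeff_eq_zero.mpr
    fun j hj => coeff_fpoly_of_lt n l a hm hj) ?_
  exact Polynomial.le_natDegree_of_ne_zero (by rw [coeff_fpoly_n n l a hm]; exact cLead_ne_zero n l a)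

lemma leadingCoeff_fpoly (hm : absSum l a ≤ n) : (fpoly n l a).leadingCoeff = cLead n l a := by
  rw [Polynomial.leadingCoeff, natDegree_fpoly n l a hm, coeff_fpoly_n n l a hm]

lemma mem_span_X_constantCoeff {x : R n} (hx : x ∈ Ideal.span {(PowerSeries.X : R n)}) :
    φ n x = 0 := by
  obtain ⟨c, rfl⟩ := Ideal.mem_span_singleton.mp hx
  simp

lemma exists_L (hm : absSum l a ≤ n) (i : Fin n) : ∃ L : R n, IsLSeries n l a i L := by
  classical
  set u := (cLead_isUnit n l a).unit with hu
  have huv : (↑u : R n) = cLead n l a := (cLead_isUnit n l a).unit_spec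
  set f := fpoly n l a with hf
  set g := Polynomial.C (↑u⁻¹ : R n) * f with hg
  have hgmonic : g.Monic := by
    have : g.leadingCoeff = (↑u⁻¹ : R n) * f.leadingCoeff := by
      rw [hg, Polynomial.leadingCoeff_mul, Polynomial.leadingCoeff_C]
    rw [Polynomial.Monic, this, leadingCoeff_fpoly n l a hm, ← huv, Units.inv_mul]
  set I := Ideal.span {(PowerSeries.X : R n)} with hI
  have hfeval : f.eval (PowerSeries.C (alpha n i))
      = -(PowerSeries.X * (PowerSeries.C (aPow n l a)
          * (PowerSeries.C (alpha n i)) ^ absSum l a)) := by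
    rw [hf]; unfold fpoly
    rw [Polynomial.eval_sub, Polynomial.eval_prod]
    rw [Finset.prod_eq_zero (Finset.mem_univ i) (by simp)]
    simp [mul_assoc]
  have h1 : g.eval (PowerSeries.C (alpha n i)) ∈ I := by
    rw [hg, Polynomial.eval_mul, Polynomial.eval_C]
    refine Ideal.mul_mem_left _ _ ?_
    rw [hfeval]
    exact I.neg_mem (Ideal.mem_span_singleton.mpr (Dvd.intro _ rfl))
  have hφC : φ n (PowerSeries.C (alpha n i)) = alpha n i := by simp
  have h2 : IsUnit (Ideal.Quotient.mk I
      ((Polynomial.derivative g).eval (PowerSeries.C (alpha n i)))) := by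
    refine IsUnit.map _ ?_
    rw [PowerSeries.isUnit_iff_constantCoeff]
    refine Ne.isUnit ?_
    rw [hg, Polynomial.derivative_C_mul, Polynomial.eval_mul, Polynomial.eval_C, map_mul]
    refine mul_ne_zero ?_ (constantCoeff_deriv_eval_ne_zero n l a hφC)
    intro h0
    have : φ n (↑u⁻¹ : R n) * φ n (↑u : R n) = 1 := by
      rw [← map_mul, Units.inv_mul, map_one]
    rw [h0, zero_mul] at this
    exact zero_ne_one this
  obtain ⟨L, hroot, hmem⟩ := HenselianRing.is_henselian g hgmonic
    (PowerSeries.C (alpha n i)) h1 h2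
  refine ⟨L, (isLSeries_iff n l a i L).mpr ⟨?_, ?_⟩⟩
  · have := mem_span_X_constantCoeff n (x := L - PowerSeries.C (alpha n i)) hmem
    rw [map_sub, hφC, sub_eq_zero] at this
    exact this
  · have : f = Polynomial.C (↑u : R n) * g := by
      rw [hg, ← mul_assoc, ← Polynomial.C_mul, Units.mul_inv, Polynomial.C_1, one_mul]
    rw [← hf, this, Polynomial.eval_mul, hroot.eq_zero, mul_zero]

lemma unique_L (i : Fin n) {L L' : R n}
    (h : IsLSeries n l a i L) (h' : IsLSeries n l a i L') : L = L' := by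
  rw [isLSeries_iff] at h h'
  obtain ⟨hc, hr⟩ := h
  obtain ⟨hc', hr'⟩ := h'
  obtain ⟨k, hk⟩ := (fpoly n l a).binomExpansion L' (L - L')
  rw [add_sub_cancel, hr, hr', zero_add] at hk
  have hfac : (L - L') * ((Polynomial.derivative (fpoly n l a)).eval L' + k * (L - L')) = 0 := by
    rw [mul_add]
    rw [mul_comm ((Polynomial.derivative (fpoly n l a)).eval L') (L - L')] at hk
    linear_combination -hk
  have hne : (Polynomial.derivative (fpoly n l a)).eval L' + k * (L - L') ≠ 0 := by
    intro h0
    have := congrArg (φ n) h0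
    rw [map_add, map_mul, map_sub, hc, hc', sub_self, mul_zero, add_zero, map_zero] at this
    exact constantCoeff_deriv_eval_ne_zero n l a hc' this
  have := mul_eq_zero.mp hfac
  rcases this with h0 | h0
  · exact sub_eq_zero.mp h0
  · exact absurd h0 hne

lemma factorization (hn : 1 ≤ n) (hm : absSum l a ≤ n) (L : Fin n → R n)
    (hL : ∀ i, IsLSeries n l a i (L i)) :
    fpoly n l a = Polynomial.C (cLead n l a)
      * ∏ i : Fin n, (Polynomial.X - Polynomial.C (L i)) := by
  classical
  set Q : Polynomial (R n) := ∏ i : Fin n, (Polynomial.X - Polynomial.C (L i)) with hQ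
  have hQmonic : Q.Monic :=
    Polynomial.monic_prod_of_monic _ _ fun k _ => Polynomial.monic_X_sub_C _
  have hQdeg : Q.natDegree = n := by
    rw [hQ, Polynomial.natDegree_prod _ _ fun k _ => Polynomial.X_sub_C_ne_zero _]
    simp
  set G : Polynomial (R n) := fpoly n l a - Polynomial.C (cLead n l a) * Q with hG
  have hLinj : Function.Injective L := by
    intro i j h
    have h2 : φ n (L i) = φ n (L j) := congrArg (φ n) h
    rw [(hL i).1, (hL j).1] at h2
    exact alpha_injective n h2
  have heval : ∀ i, G.eval (L i) = 0 := by
    intro i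
    have h1 : (fpoly n l a).eval (L i) = 0 := ((isLSeries_iff n l a i (L i)).mp (hL i)).2
    have h2 : Q.eval (L i) = 0 := by
      rw [hQ, Polynomial.eval_prod, Finset.prod_eq_zero (Finset.mem_univ i) (by simp)]
    rw [hG, Polynomial.eval_sub, Polynomial.eval_mul, h1, h2, mul_zero, sub_zero]
  have hcoeff : ∀ j, n ≤ j → G.coeff j = 0 := by
    intro j hj
    rw [hG, Polynomial.coeff_sub, Polynomial.coeff_C_mul]
    rcases eq_or_lt_of_le hj with h | h
    · rw [← h, coeff_fpoly_n n l a hm]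
      have : Q.coeff n = 1 := by
        have := hQmonic.coeff_natDegree
        rwa [hQdeg] at this
      rw [this, mul_one, sub_self]
    · rw [coeff_fpoly_of_lt n l a hm h,
        Polynomial.coeff_eq_zero_of_natDegree_lt (by rw [hQdeg]; exact h), mul_zero, sub_zero]
  have hdeg : G.natDegree < n := by
    have h1 : G.natDegree ≤ n - 1 :=
      Polynomial.natDegree_le_iff_coeff_eq_zero.mpr fun j hj => hcoeff j (by omega)
    omega
  have hzero : G = 0 :=
    Polynomial.eq_zero_of_natDegree_lt_card_of_eval_eq_zero G hLinj heval (by simpa using hdeg)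
  rw [hG, sub_eq_zero] at hzero
  exact hzero

end Main

/-- for each `i` there is a unique `L_i ∈ ℚ_α[[q]]` with constant term `αᵢ`
satisfying `∏ₖ(L_i − αₖ) = q·a^a·L_i^{|a|}`; moreover, in `ℚ_α[[q]][Y]`,
`∏ₖ(Y − αₖ) − q·a^a·Y^{|a|} = c(q)·∏ᵢ(Y − L_i)` with `c(q) = 1 − a^a q` if `|a| = n` and
`c(q) = 1` if `|a| < n`. -/
theorem statement14 (n l : ℕ) (hn : 1 ≤ n) (a : Fin l → ℤ) (ha : ∀ k, a k ≠ 0)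
    (hm : absSum l a ≤ n) :
    (∀ i : Fin n, ∃! L : PowerSeries (Kf n), IsLSeries n l a i L) ∧
    (∀ L : Fin n → PowerSeries (Kf n), (∀ i : Fin n, IsLSeries n l a i (L i)) →
      (∏ k : Fin n,
          ((Polynomial.X : Polynomial (PowerSeries (Kf n)))
            - Polynomial.C (PowerSeries.C (alpha n k))))
        - Polynomial.C (PowerSeries.X * PowerSeries.C (aPow n l a))
            * Polynomial.X ^ absSum l a
      = Polynomial.C
          (if absSum l a = n then
            1 - PowerSeries.C (aPow n l a) * PowerSeries.X
          else 1)
          * ∏ i : Fin n,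
              ((Polynomial.X : Polynomial (PowerSeries (Kf n)))
                - Polynomial.C (L i))) := by
  constructor
  · intro i
    obtain ⟨L, hL⟩ := exists_L n l a hm i
    exact ⟨L, hL, fun y hy => unique_L n l a i hy hL⟩
  · intro L hL
    have h := factorization n l a hn hm L hL
    unfold fpoly cLead at h
    exact h



end SQ
end
end
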